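/- arXiv:1709.09985 — 2 statements merged into one kernel-verified Lean document; each statement's English description precedes it below -/
import Mathlib

section
/- Let G be a finite simple graph, R a graph possibly with loops, (V_u)_{u∈V(R)} a partition of V(G), and let P_u denote the u-perfect set. Then for every vertex v∈V_u and every vertex w distinct from v, the vertex w lies in the symmetric difference N_{G^R}(v) △ P_u if and only if w is a neighbor of v in G. Consequently, |N_{G^R}(v) △ P_u| equals deg_G(v) if u has no loop, and equals deg_G(v) + 1 if u has a loop. -/
/-- The graph `G^R`: given a graph `R` possibly with loops on a node type `ι`
(presented as a relation) and a partition of `V(G)` indexed by the nodes of `R`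
(presented as `p : V → ι`, the part `V_u` being `p ⁻¹' {u}`), two distinct
vertices are adjacent in `G^R` iff exactly one of the following holds:
they are adjacent in `G`, or their parts are adjacent in `R`. -/
def SimpleGraph.patternApply {V ι : Type*} (G : SimpleGraph V) (R : ι → ι → Prop)
    (p : V → ι) : SimpleGraph V where
  Adj v w := v ≠ w ∧ Xor' (G.Adj v w) (R (p v) (p w) ∨ R (p w) (p v))
  symm := by
    constructor
    rintro v w ⟨h1, h2⟩
    refine ⟨h1.symm, ?_⟩
    rwa [G.adj_comm, or_comm] at h2
  loopless := ⟨fun v h => h.1 rfl⟩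

/-- A pattern: a graph possibly with loops (a symmetric relation on nodes) with
no pair of adjacent twins both having loops and no pair of non-adjacent twins
neither of which has a loop. -/
def IsPattern {ι : Type*} (R : ι → ι → Prop) : Prop :=
  Symmetric R ∧ ∀ u₁ u₂ : ι, u₁ ≠ u₂ →
    (∀ w : ι, w ≠ u₁ → w ≠ u₂ → (R u₁ w ↔ R u₂ w)) →
    ¬((R u₁ u₂ ∧ R u₁ u₁ ∧ R u₂ u₂) ∨ (¬R u₁ u₂ ∧ ¬R u₁ u₁ ∧ ¬R u₂ u₂))

/-- `G` is `d`-degenerate: the vertices can be linearly ordered (via an injection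
into `ℕ`) so that every vertex has at most `d` neighbors preceding it. -/
def SimpleGraph.Degenerate {V : Type*} (G : SimpleGraph V) (d : ℕ) : Prop :=
  ∃ f : V → ℕ, Function.Injective f ∧ ∀ v : V, {w : V | G.Adj v w ∧ f w < f v}.ncard ≤ d

/-- Two sets of vertices are `k`-similar if their symmetric difference has at
most `k` elements. -/
def KSimilar {V : Type*} (k : ℕ) (X Y : Set V) : Prop := (symmDiff X Y).ncard ≤ k

/-- The `k`-similarity graph of `H`: two distinct vertices are adjacent iff
their neighborhoods are `k`-similar. -/
def simGraph {V : Type*} (H : SimpleGraph V) (k : ℕ) : SimpleGraph V where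
  Adj v w := v ≠ w ∧ KSimilar k (H.neighborSet v) (H.neighborSet w)
  symm := by
    constructor
    rintro v w ⟨h1, h2⟩
    exact ⟨h1.symm, by rwa [KSimilar, symmDiff_comm]⟩
  loopless := ⟨fun v h => h.1 rfl⟩

/-- The `u`-perfect set: the union of the parts `V_{u'}` over all neighbors
`u'` of `u` in `R`. -/
def perfectSet {V ι : Type*} (R : ι → ι → Prop) (p : V → ι) (u : ι) : Set V :=
  {v : V | R u (p v)}

/-- A vertex `v` is `(u,k)`-perfect if its neighborhood in `G^R` is `k`-similar
to the `u`-perfect set. -/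
def PerfectVtx {V ι : Type*} (G : SimpleGraph V) (R : ι → ι → Prop) (p : V → ι)
    (u : ι) (k : ℕ) (v : V) : Prop :=
  KSimilar k ((G.patternApply R p).neighborSet v) (perfectSet R p u)

/-- Complementing a graph on a subset `S` of its vertices: adjacency between
distinct vertices of `S` is flipped, all other adjacencies are unchanged. -/
def complementOn {V : Type*} (G : SimpleGraph V) (S : Set V) : SimpleGraph V where
  Adj v w := v ≠ w ∧ Xor' (G.Adj v w) (v ∈ S ∧ w ∈ S)
  symm := by
    constructor
    rintro v w ⟨h1, h2⟩
    refine ⟨h1.symm, ?_⟩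
    rwa [G.adj_comm, and_comm] at h2
  loopless := ⟨fun v h => h.1 rfl⟩

/-- for `v ∈ V_u`, a vertex `w ≠ v` lies in `N_{G^R}(v) △ P_u` iff `w` is a
neighbor of `v` in `G`; consequently `|N_{G^R}(v) △ P_u|` is `deg_G(v)` if `u` has no
loop and `deg_G(v) + 1` if `u` has a loop. -/
theorem stmt3 {V ι : Type*} [Fintype V] (G : SimpleGraph V) (R : ι → ι → Prop)
    (hR : Symmetric R) (p : V → ι) (u : ι) (v : V) (hv : p v = u) :
    (∀ w : V, w ≠ v →
      (w ∈ symmDiff ((G.patternApply R p).neighborSet v) (perfectSet R p u) ↔ G.Adj v w)) ∧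
    (¬ R u u →
      (symmDiff ((G.patternApply R p).neighborSet v) (perfectSet R p u)).ncard =
        (G.neighborSet v).ncard) ∧
    (R u u →
      (symmDiff ((G.patternApply R p).neighborSet v) (perfectSet R p u)).ncard =
        (G.neighborSet v).ncard + 1) := by

  have key : ∀ w : V, w ≠ v →
      (w ∈ symmDiff ((G.patternApply R p).neighborSet v) (perfectSet R p u) ↔ G.Adj v w) := by
    intro w hw
    have hP : w ∈ perfectSet R p u ↔ R u (p w) := Iff.rfl
    have hN : w ∈ (G.patternApply R p).neighborSet v ↔
        Xor' (G.Adj v w) (R u (p w)) := by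
      simp only [SimpleGraph.mem_neighborSet, SimpleGraph.patternApply, ← hv]
      constructor
      · rintro ⟨-, h⟩
        rcases h with ⟨h1, h2⟩ | ⟨h1, h2⟩
        · exact Or.inl ⟨h1, fun hr => h2 (Or.inl hr)⟩
        · rcases h1 with h1 | h1
          · exact Or.inr ⟨h1, h2⟩
          · exact Or.inr ⟨hR h1, h2⟩
      · rintro (⟨h1, h2⟩ | ⟨h1, h2⟩)
        · exact ⟨hw.symm, Or.inl ⟨h1, by rintro (h | h); exacts [h2 h, h2 (hR h)]⟩⟩
        · exact ⟨hw.symm, Or.inr ⟨Or.inl h1, h2⟩⟩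
    rw [Set.mem_symmDiff, hP, hN]
    by_cases hG : G.Adj v w <;> by_cases hr : R u (p w) <;>
      simp [Xor', hG, hr]
  refine ⟨key, ?_, ?_⟩
  · intro hloop
    congr 1
    ext w
    by_cases hw : w = v
    · subst hw
      simp [Set.mem_symmDiff, perfectSet, hv, hloop]
    · rw [key w hw, SimpleGraph.mem_neighborSet, G.adj_comm]
  · intro hloop
    have hset : symmDiff ((G.patternApply R p).neighborSet v) (perfectSet R p u)
        = insert v (G.neighborSet v) := by
      ext w
      by_cases hw : w = v
      · subst hw
        simp [Set.mem_symmDiff, perfectSet, hv, hloop]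
      · rw [key w hw]
        simp [hw, SimpleGraph.mem_neighborSet, G.adj_comm]
    rw [hset, Set.ncard_insert_of_notMem (by simp) (Set.toFinite _), Nat.add_comm]
end

section
/- Let G be a finite simple graph, R a graph possibly with loops on K nodes, (V_u)_{u∈V(R)} a partition of V(G), and (A,B) a partition of V(G) into two sets. For a graph H on vertex set V(G), let M_H denote the A×B matrix over the two-element field GF(2) whose (a,b) entry is 1 if and only if ab is an edge of H. Then the rank of M_{G^R} over GF(2) is at most the rank of M_G over GF(2) plus K. -/
lemma matrix_rank_add_le {m n : Type*} [Fintype m] [Fintype n] [DecidableEq n]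
    (A B : Matrix m n (ZMod 2)) : (A + B).rank ≤ A.rank + B.rank := by
  rw [Matrix.rank, Matrix.rank, Matrix.rank, Matrix.mulVecLin_add]
  have h : LinearMap.range (A.mulVecLin + B.mulVecLin) ≤
      LinearMap.range A.mulVecLin ⊔ LinearMap.range B.mulVecLin := by
    rintro x ⟨y, rfl⟩
    exact Submodule.add_mem_sup ⟨y, rfl⟩ ⟨y, rfl⟩
  exact (Submodule.finrank_mono h).trans
    (Submodule.finrank_add_le_finrank_add_finrank _ _)

/-- for a partition `(A,B)` of `V(G)` into two sets and the `A×B`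
GF(2) adjacency matrices `M₁` of `G` and `M₂` of `G^R` (an entry is `1` iff the
corresponding pair is an edge; over `GF(2)` every entry is `0` or `1`, so the matrices
are determined by these conditions), the rank of `M₂` over `GF(2)` is at most the rank
of `M₁` over `GF(2)` plus the number `K` of nodes of `R`. -/
theorem stmt17 {V ι : Type*} [Fintype V] [DecidableEq V] [Fintype ι] (K : ℕ)
    (hK : Fintype.card ι = K)
    (G : SimpleGraph V) (R : ι → ι → Prop) (hR : Symmetric R) (p : V → ι)
    (A B : Finset V) (hunion : A ∪ B = Finset.univ) (hdisj : Disjoint A B)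
    (M₁ M₂ : Matrix A B (ZMod 2))
    (hM₁ : ∀ (a : A) (b : B), M₁ a b = 1 ↔ G.Adj a.1 b.1)
    (hM₂ : ∀ (a : A) (b : B), M₂ a b = 1 ↔ (G.patternApply R p).Adj a.1 b.1) :
    M₂.rank ≤ M₁.rank + K := by
  classical
  have hzmod : ∀ x : ZMod 2, x = 0 ∨ x = 1 := by decide
  have hval : ∀ (x : ZMod 2) (P : Prop), (x = 1 ↔ P) → x = if P then 1 else 0 := by
    intro x P h
    by_cases hP : P
    · simp [hP, h.mpr hP]
    · simp only [if_neg hP]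
      rcases hzmod x with h0 | h1
      · exact h0
      · exact absurd (h.mp h1) hP
  set N : Matrix A B (ZMod 2) := fun a b => if R (p a.1) (p b.1) then 1 else 0 with hN
  have hab : ∀ (a : A) (b : B), a.1 ≠ b.1 := by
    rintro ⟨a, ha⟩ ⟨b, hb⟩ h
    simp only at h
    subst h
    exact (Finset.disjoint_left.mp hdisj ha) hb
  have hsplit : M₂ = M₁ + N := by
    ext a b
    have hadj : (G.patternApply R p).Adj a.1 b.1 ↔
        Xor' (G.Adj a.1 b.1) (R (p a.1) (p b.1)) := by
      constructor
      · rintro ⟨-, h⟩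
        rcases h with ⟨hg, hr⟩ | ⟨hr, hg⟩
        · exact Or.inl ⟨hg, fun hc => hr (Or.inl hc)⟩
        · exact Or.inr ⟨hr.elim id (fun h => hR h), hg⟩
      · intro h
        refine ⟨hab a b, ?_⟩
        rcases h with ⟨hg, hr⟩ | ⟨hr, hg⟩
        · exact Or.inl ⟨hg, fun hc => hr (hc.elim id (fun h => hR h))⟩
        · exact Or.inr ⟨Or.inl hr, hg⟩
    rw [hval _ _ ((hM₂ a b).trans hadj), Matrix.add_apply, hval _ _ (hM₁ a b)]
    by_cases hG : G.Adj a.1 b.1 <;> by_cases hRR : R (p a.1) (p b.1) <;>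
      simp [hN, Xor', hG, hRR] <;> decide
  have hPQ : N = (Matrix.of fun (a : A) (u : ι) => if p a.1 = u then (1 : ZMod 2) else 0) *
      (Matrix.of fun (u : ι) (b : B) => if R u (p b.1) then (1 : ZMod 2) else 0) := by
    ext a b
    simp only [hN, Matrix.mul_apply, Matrix.of_apply, ite_mul, one_mul, zero_mul]
    rw [Finset.sum_ite_eq Finset.univ (p a.1) (fun u => if R u (p b.1) then (1 : ZMod 2) else 0)]
    simp
  have hNrank : N.rank ≤ K := by
    rw [hPQ]
    exact (Matrix.rank_mul_le_right _ _).trans (hK ▸ Matrix.rank_le_card_height _)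
  calc M₂.rank = (M₁ + N).rank := by rw [hsplit]
    _ ≤ M₁.rank + N.rank := matrix_rank_add_le _ _
    _ ≤ M₁.rank + K := by omega
end
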